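/- Let n ≥ 1 and let J = J_{2n} be the 2n×2n antidiagonal permutation matrix. A 2n×2n permutation matrix A has underlying permutation mapping every admissible subset of {1,…,2n} to an admissible subset if and only if AᵗJA = AJAᵗ = J. -/

import Mathlib

open Matrix

/-- The m×m antidiagonal permutation matrix (1-based: (i,j) entry is 1 iff i+j = m+1). -/
def Jmat (m : ℕ) : Matrix (Fin m) (Fin m) ℤ :=
  Matrix.of fun i j => if (i : ℕ) + (j : ℕ) + 1 = m then 1 else 0

/-- The permutation matrix of σ: column k has its 1 in row σ(k). -/
def permMat (m : ℕ) (σ : Equiv.Perm (Fin m)) : Matrix (Fin m) (Fin m) ℤ :=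
  Matrix.of fun i j => if i = σ j then 1 else 0

/-- Admissible subset of {1,…,2n} (0-based: bar is `Fin.rev`). -/
def Admissible (n : ℕ) (P : Set (Fin (2 * n))) : Prop :=
  P = Set.univ ∨ ∀ i ∈ P, Fin.rev i ∉ P

lemma entry1 (m : ℕ) (σ : Equiv.Perm (Fin m)) (i j : Fin m) :
    ((permMat m σ)ᵀ * Jmat m * permMat m σ) i j = Jmat m (σ i) (σ j) := by
  simp only [Matrix.mul_apply, permMat, Jmat, transpose_apply, Matrix.of_apply, ite_mul, mul_ite,
    one_mul, zero_mul, mul_one, mul_zero, Finset.sum_ite_eq, Finset.sum_ite_eq',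
    Finset.mem_univ, if_true]
  rw [Finset.sum_eq_single (σ i)]
  · simp
  · intro b _ hb; simp [hb]
  · simp

lemma entry2 (m : ℕ) (σ : Equiv.Perm (Fin m)) (i j : Fin m) :
    (permMat m σ * Jmat m * (permMat m σ)ᵀ) i j = Jmat m (σ⁻¹ i) (σ⁻¹ j) := by
  simp only [Matrix.mul_apply, permMat, Jmat, transpose_apply, Matrix.of_apply, ite_mul, mul_ite,
    one_mul, zero_mul, mul_one, mul_zero, Finset.sum_ite_eq, Finset.sum_ite_eq',
    Finset.mem_univ, if_true]
  rw [Finset.sum_eq_single (σ⁻¹ j)]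
  · rw [Finset.sum_eq_single (σ⁻¹ i)]
    · simp
    · intro b _ hb
      have : i ≠ σ b := by
        intro h; exact hb (by simp [h])
      simp [this]
    · simp
  · intro b _ hb
    have : j ≠ σ b := by
      intro h; exact hb (by simp [h])
    simp [this]
  · simp

lemma jmat_cond (m : ℕ) (i j : Fin m) : (i : ℕ) + (j : ℕ) + 1 = m ↔ j = Fin.rev i := by
  rw [Fin.ext_iff, Fin.val_rev]
  have := i.isLt; have := j.isLt
  omega

/-- J (σ i) (σ j) = J i j for all i j iff σ commutes with rev. -/
lemma jmat_conj_iff (m : ℕ) (σ : Equiv.Perm (Fin m)) :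
    (∀ i j : Fin m, Jmat m (σ i) (σ j) = Jmat m i j) ↔
      ∀ i : Fin m, σ (Fin.rev i) = Fin.rev (σ i) := by
  constructor
  · intro h i
    have := h i (Fin.rev i)
    simp only [Jmat, Matrix.of_apply] at this
    rw [if_pos ((jmat_cond m i (Fin.rev i)).mpr rfl)] at this
    by_contra hne
    rw [if_neg] at this
    · exact one_ne_zero this.symm
    · intro hc
      exact hne ((jmat_cond m (σ i) (σ (Fin.rev i))).mp hc)
  · intro h i j
    simp only [Jmat, Matrix.of_apply]
    congr 1
    rw [jmat_cond, jmat_cond, ← h i, EmbeddingLike.apply_eq_iff_eq]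

lemma comm_inv (m : ℕ) (σ : Equiv.Perm (Fin m))
    (h : ∀ i : Fin m, σ (Fin.rev i) = Fin.rev (σ i)) :
    ∀ i : Fin m, σ⁻¹ (Fin.rev i) = Fin.rev (σ⁻¹ i) := by
  intro i
  have := h (σ⁻¹ i)
  rw [show σ (σ⁻¹ i) = i from σ.apply_symm_apply i] at this
  rw [← this, show σ⁻¹ (σ (σ⁻¹ i).rev) = (σ⁻¹ i).rev from σ.symm_apply_apply _]

theorem stmt1 (n : ℕ) (hn : 1 ≤ n) (σ : Equiv.Perm (Fin (2 * n))) :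
    (∀ P : Set (Fin (2 * n)), Admissible n P → Admissible n (σ '' P)) ↔
      ((permMat (2 * n) σ)ᵀ * Jmat (2 * n) * permMat (2 * n) σ = Jmat (2 * n) ∧
        permMat (2 * n) σ * Jmat (2 * n) * (permMat (2 * n) σ)ᵀ = Jmat (2 * n)) := by
  have key : (∀ P : Set (Fin (2 * n)), Admissible n P → Admissible n (σ '' P)) ↔
      ∀ i : Fin (2 * n), σ (Fin.rev i) = Fin.rev (σ i) := by
    constructor
    · intro hP
      rcases eq_or_lt_of_le hn with h1 | h2
      · -- n = 1 : any permutation of Fin 2 commutes with rev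
        intro i
        have hm : 2 * n = 2 := by omega
        have hri : Fin.rev i ≠ i := by
          intro hc
          have := congrArg Fin.val hc
          rw [Fin.val_rev] at this
          have := i.isLt
          omega
        have h1 : σ (Fin.rev i) ≠ σ i := fun hc => hri (σ.injective hc)
        have h2 : Fin.rev (σ i) ≠ σ i := by
          intro hc
          have := congrArg Fin.val hc
          rw [Fin.val_rev] at this
          have := (σ i).isLt
          omega
        have hv1 := (σ (Fin.rev i)).isLt
        have hv2 := (Fin.rev (σ i)).isLt
        have hv3 := (σ i).isLt
        have n1 : (σ (Fin.rev i) : ℕ) ≠ (σ i : ℕ) := fun hc => h1 (Fin.ext hc)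
        have n2 : (Fin.rev (σ i) : ℕ) ≠ (σ i : ℕ) := fun hc => h2 (Fin.ext hc)
        exact Fin.ext (by omega)
      · -- n ≥ 2
        intro i
        by_contra hne
        set j := σ⁻¹ (Fin.rev (σ i)) with hj
        have hσj : σ j = Fin.rev (σ i) := σ.apply_symm_apply _
        have hji : j ≠ Fin.rev i := by
          intro hc
          exact hne (by rw [← hc, hσj])
        have hrevne : ∀ k : Fin (2 * n), Fin.rev k ≠ k := by
          intro k hc
          have := congrArg Fin.val hc
          rw [Fin.val_rev] at this
          have := k.isLt
          omega
        have hij : j ≠ i := by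
          intro hc
          apply hrevne (σ i)
          rw [← hσj, hc]
        have hadm : Admissible n {i, j} := by
          right
          intro x hx hrx
          rcases hx with hx | hx
          · rcases hrx with h | h
            · rw [hx] at h; exact hrevne i h
            · rw [Set.mem_singleton_iff] at h
              rw [hx] at h
              exact hji h.symm
          · rw [Set.mem_singleton_iff] at hx
            rcases hrx with h | h
            · rw [hx] at h
              apply hji
              rw [← h, Fin.rev_rev]
            · rw [Set.mem_singleton_iff] at h
              rw [hx] at h
              exact hrevne j h
        have himg := hP _ hadm
        have hmem1 : σ i ∈ σ '' {i, j} := ⟨i, by simp, rfl⟩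
        have hmem2 : Fin.rev (σ i) ∈ σ '' {i, j} := ⟨j, by simp, hσj⟩
        rcases himg with huniv | hgood
        · -- σ '' {i, j} = univ is impossible since 2n ≥ 4
          have h0 : (⟨0, by omega⟩ : Fin (2 * n)) ∈ σ '' {i, j} := huniv ▸ Set.mem_univ _
          have h1 : (⟨1, by omega⟩ : Fin (2 * n)) ∈ σ '' {i, j} := huniv ▸ Set.mem_univ _
          have h2' : (⟨2, by omega⟩ : Fin (2 * n)) ∈ σ '' {i, j} := huniv ▸ Set.mem_univ _
          have hcard : ∀ x : Fin (2 * n), x ∈ σ '' {i, j} → x = σ i ∨ x = σ j := by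
            rintro x ⟨y, hy, rfl⟩
            rcases hy with hy | hy
            · left; rw [hy]
            · right; rw [Set.mem_singleton_iff] at hy; rw [hy]
          have c0 : (0 : ℕ) = (σ i : ℕ) ∨ (0 : ℕ) = (σ j : ℕ) := by
            rcases hcard _ h0 with e | e
            · exact Or.inl (congrArg Fin.val e)
            · exact Or.inr (congrArg Fin.val e)
          have c1 : (1 : ℕ) = (σ i : ℕ) ∨ (1 : ℕ) = (σ j : ℕ) := by
            rcases hcard _ h1 with e | e
            · exact Or.inl (congrArg Fin.val e)
            · exact Or.inr (congrArg Fin.val e)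
          have c2 : (2 : ℕ) = (σ i : ℕ) ∨ (2 : ℕ) = (σ j : ℕ) := by
            rcases hcard _ h2' with e | e
            · exact Or.inl (congrArg Fin.val e)
            · exact Or.inr (congrArg Fin.val e)
          omega
        · exact hgood _ hmem1 hmem2
    · intro hcomm P hP
      rcases hP with rfl | hP
      · left
        exact Set.image_univ_of_surjective σ.surjective
      · right
        rintro x ⟨a, ha, rfl⟩ ⟨b, hb, hab⟩
        rw [← hcomm a] at hab
        have : b = Fin.rev a := σ.injective hab
        exact hP a ha (this ▸ hb)
  rw [key]
  constructor
  · intro h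
    refine ⟨?_, ?_⟩
    · ext i j
      rw [entry1]
      exact (jmat_conj_iff _ σ).mpr h i j
    · ext i j
      rw [entry2]
      exact (jmat_conj_iff _ σ⁻¹).mpr (comm_inv _ σ h) i j
  · intro ⟨h1, _⟩
    apply (jmat_conj_iff _ σ).mp
    intro i j
    rw [← entry1, h1]
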